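/- The two syzygies S₁ = (G₈, 0, −x²) and S₂ = ((s+1)(3(s+1)x² − 4sx − 4s), −1, −8s(x+1)) between the polynomials x², P₈, G₈ form a basis of the ℚ(s)[x]-module of syzygies; equivalently, their cross product (q₁r₂ − q₂r₁, p₂r₁ − p₁r₂, p₁q₂ − p₂q₁) is a nonzero ℚ(s)-multiple of (x², P₈, G₈). -/

import Mathlib

open Polynomial

/-- The module of syzygies between three univariate polynomials `P, Q, R`:
triples `(p, q, r)` with `p*P + q*Q + r*R = 0`, as a submodule of `(K[x])³`. -/
noncomputable def syzygyModule {K : Type*} [Field K] (P Q R : K[X]) :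
    Submodule K[X] (Fin 3 → K[X]) :=
  LinearMap.ker
    (P • (LinearMap.proj 0 : (Fin 3 → K[X]) →ₗ[K[X]] K[X])
      + Q • (LinearMap.proj 1 : (Fin 3 → K[X]) →ₗ[K[X]] K[X])
      + R • (LinearMap.proj 2 : (Fin 3 → K[X]) →ₗ[K[X]] K[X]))

lemma mem_syzygyModule {K : Type*} [Field K] (P Q R : K[X]) (v : Fin 3 → K[X]) :
    v ∈ syzygyModule P Q R ↔ P * v 0 + Q * v 1 + R * v 2 = 0 := by
  simp [syzygyModule, smul_eq_mul]

theorem S1_S2_basis_of_syzygies_x2_P8_G8 :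
    let s : (RatFunc ℚ)[X] := C RatFunc.X
    let x : (RatFunc ℚ)[X] := X
    let G₈ : (RatFunc ℚ)[X] := x^2 - 2*s*x - s
    let P₈ : (RatFunc ℚ)[X] :=
      3*(s+1)^2*x^4 - 4*s*(s+3)*x^3 + 12*s*(s-1)*x^2 + 24*s^2*x + 8*s^2
    let p₁ : (RatFunc ℚ)[X] := G₈
    let q₁ : (RatFunc ℚ)[X] := 0
    let r₁ : (RatFunc ℚ)[X] := -x^2
    let p₂ : (RatFunc ℚ)[X] := (s+1)*(3*(s+1)*x^2 - 4*s*x - 4*s)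
    let q₂ : (RatFunc ℚ)[X] := -1
    let r₂ : (RatFunc ℚ)[X] := -8*s*(x+1)
    (∃ (h₁ : (![p₁, q₁, r₁] : Fin 3 → (RatFunc ℚ)[X]) ∈ syzygyModule (x^2) P₈ G₈)
        (h₂ : (![p₂, q₂, r₂] : Fin 3 → (RatFunc ℚ)[X]) ∈ syzygyModule (x^2) P₈ G₈)
        (b : Module.Basis (Fin 2) ((RatFunc ℚ)[X]) (syzygyModule (x^2) P₈ G₈)),
        b 0 = ⟨![p₁, q₁, r₁], h₁⟩ ∧ b 1 = ⟨![p₂, q₂, r₂], h₂⟩)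
    ∧ ∃ c : RatFunc ℚ, c ≠ 0 ∧
        q₁ * r₂ - q₂ * r₁ = C c * x^2 ∧
        p₂ * r₁ - p₁ * r₂ = C c * P₈ ∧
        p₁ * q₂ - p₂ * q₁ = C c * G₈ := by
  intro s x G₈ P₈ p₁ q₁ r₁ p₂ q₂ r₂
  have hs : (RatFunc.X : RatFunc ℚ) ≠ 0 := RatFunc.X_ne_zero
  have hx2 : x ^ 2 ≠ 0 := by
    simp only [x]; exact pow_ne_zero 2 X_ne_zero
  have hG : G₈ ≠ 0 := by
    intro h
    have h2 := congrArg (eval 0) h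
    simp only [G₈, x, s, eval_sub, eval_mul, eval_pow, eval_X, eval_C, eval_zero,
      eval_ofNat] at h2
    simp at h2
    exact hs h2
  -- the key cross-product identity
  have hkey : P₈ = p₂ * x^2 - 8*s*(x+1)*G₈ := by
    simp only [P₈, p₂, G₈]; ring
  have h₁ : (![p₁, q₁, r₁] : Fin 3 → (RatFunc ℚ)[X]) ∈ syzygyModule (x^2) P₈ G₈ := by
    rw [mem_syzygyModule]
    show x^2 * p₁ + P₈ * q₁ + G₈ * r₁ = 0
    simp only [p₁, q₁, r₁]; ring
  have h₂ : (![p₂, q₂, r₂] : Fin 3 → (RatFunc ℚ)[X]) ∈ syzygyModule (x^2) P₈ G₈ := by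
    rw [mem_syzygyModule]
    show x^2 * p₂ + P₈ * q₂ + G₈ * r₂ = 0
    simp only [q₂, r₂]
    linear_combination -hkey
  -- a Bezout identity showing x^2 and G₈ are coprime
  have hCs : C ((RatFunc.X : RatFunc ℚ)⁻¹) * s = 1 := by
    simp only [s]; rw [← C_mul, inv_mul_cancel₀ hs, C_1]
  set u : (RatFunc ℚ)[X] := 4 - C (RatFunc.X : RatFunc ℚ)⁻¹ * (2*x - 1) with hu
  set w : (RatFunc ℚ)[X] := C (RatFunc.X : RatFunc ℚ)⁻¹ * (2*x - 1) with hw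
  have hbez : u * x^2 + w * G₈ = 1 := by
    simp only [hu, hw, G₈]
    linear_combination (-(4*x^2 - 1)) * hCs
  set e1 : syzygyModule (x^2) P₈ G₈ := ⟨![p₁, q₁, r₁], h₁⟩ with he1
  set e2 : syzygyModule (x^2) P₈ G₈ := ⟨![p₂, q₂, r₂], h₂⟩ with he2
  have hli : LinearIndependent ((RatFunc ℚ)[X]) ![e1, e2] := by
    rw [LinearIndependent.pair_iff]
    intro a b hab
    have hab' : a • (![p₁, q₁, r₁] : Fin 3 → (RatFunc ℚ)[X]) + b • ![p₂, q₂, r₂] = 0 := by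
      have := congrArg Subtype.val hab
      simpa only [he1, he2, Submodule.coe_add, SetLike.val_smul, ZeroMemClass.coe_zero]
        using this
    have hb := congrFun hab' 1
    simp only [Pi.add_apply, Pi.smul_apply, smul_eq_mul, Matrix.cons_val_one, Matrix.head_cons,
      Pi.zero_apply, q₁, q₂, Matrix.cons_val_zero] at hb
    have hb0 : b = 0 := by linear_combination -hb
    have ha := congrFun hab' 0
    simp only [Pi.add_apply, Pi.smul_apply, smul_eq_mul, Matrix.cons_val_zero,
      Pi.zero_apply, hb0, p₁] at ha
    have ha0 : a * G₈ = 0 := by linear_combination ha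
    rcases mul_eq_zero.mp ha0 with h | h
    · exact ⟨h, hb0⟩
    · exact absurd h hG
  have hspan : ⊤ ≤ Submodule.span ((RatFunc ℚ)[X]) (Set.range ![e1, e2]) := by
    rintro ⟨v, hv⟩ -
    rw [Submodule.mem_span_range_iff_exists_fun]
    rw [mem_syzygyModule] at hv
    -- key divisibility computation
    have key2 : x^2 * (v 0 + v 1 * p₂) = G₈ * (8*s*(x+1)*(v 1) - v 2) := by
      linear_combination hv - (v 1) * hkey
    set t : (RatFunc ℚ)[X] := 8*s*(x+1)*(v 1) - v 2 with ht
    set a : (RatFunc ℚ)[X] := u * t + w * (v 0 + v 1 * p₂) with ha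
    have hxa : x^2 * a = t := by
      rw [ha]; linear_combination t * hbez + w * key2
    have hc0 : a * p₁ + -(v 1) * p₂ = v 0 := by
      have h0 : a * G₈ = v 0 + v 1 * p₂ :=
        mul_left_cancel₀ hx2 (by linear_combination G₈ * hxa - key2)
      simp only [p₁]
      linear_combination h0
    have hc1 : a * q₁ + -(v 1) * q₂ = v 1 := by
      simp only [q₁, q₂]; ring
    have hc2 : a * r₁ + -(v 1) * r₂ = v 2 := by
      simp only [r₁, r₂]; linear_combination -hxa
    refine ⟨![a, -(v 1)], Subtype.ext ?_⟩
    simp only [Fin.sum_univ_two, Matrix.cons_val_zero, Matrix.cons_val_one, Matrix.head_cons,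
      Submodule.coe_add, SetLike.val_smul, he1, he2]
    funext i
    fin_cases i <;>
      simp only [Pi.add_apply, Pi.smul_apply, smul_eq_mul, Matrix.cons_val_zero,
        Matrix.cons_val_one, Matrix.head_cons, Matrix.cons_val_two, Matrix.tail_cons, Fin.isValue]
    · exact hc0
    · exact hc1
    · exact hc2
  refine ⟨⟨h₁, h₂, Module.Basis.mk hli hspan, ?_, ?_⟩, -1, by norm_num, ?_, ?_, ?_⟩
  · rw [Module.Basis.mk_apply]; rfl
  · rw [Module.Basis.mk_apply]; rfl
  · simp only [q₁, q₂, r₁, r₂, map_neg, map_one]; ring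
  · simp only [p₁, p₂, r₁, r₂, map_neg, map_one]
    linear_combination -hkey
  · simp only [p₁, p₂, q₁, q₂, map_neg, map_one]; ring
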